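/- Let (𝐓,γ) be a quasistatic dynamical system satisfying conditions (I) and (II). Then for each α,β ∈ {1,…,d}, the map t ↦ (Σ̂_t)_{αβ}(f) is Hölder continuous on [0,1] with exponent ψ(φ−1)/(φ+1). -/

import Mathlib

open MeasureTheory Filter Set ProbabilityTheory
open scoped Classical

noncomputable section

variable {X : Type*}

/-- `compSeq S k = S k ∘ ⋯ ∘ S 1` (`= id` for `k = 0`): a `k`-fold composition `𝒯_k`. -/
def compSeq (S : ℕ → X → X) : ℕ → X → X
  | 0 => id
  | k+1 => S (k+1) ∘ compSeq S k

/-- `rowComp T n m k = T n (m+k) ∘ ⋯ ∘ T n (m+1)` (`= id` for `k = 0`). -/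
def rowComp (T : ℕ → ℕ → X → X) (n m : ℕ) : ℕ → X → X
  | 0 => id
  | k+1 => T n (m+k+1) ∘ rowComp T n m k

/-- `gammaSeq γ r k = γ_{r k} ∘ ⋯ ∘ γ_{r 1}` (`= id` for `k = 0`). -/
def gammaSeq (γ : ℝ → X → X) (r : ℕ → ℝ) : ℕ → X → X
  | 0 => id
  | k+1 => γ (r (k+1)) ∘ gammaSeq γ r k

/-- `gammaRow γ n m k = γ_{(m+k)/n} ∘ ⋯ ∘ γ_{(m+1)/n}` (`= id` for `k = 0`). -/
def gammaRow (γ : ℝ → X → X) (n m : ℕ) : ℕ → X → X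
  | 0 => id
  | k+1 => γ (((m:ℝ) + k + 1) / (n:ℝ)) ∘ gammaRow γ n m k

/-- The family `𝐓' = 𝐓 ∪ {γ_t : t ∈ [0,1]}`. -/
def Tprime (T : ℕ → ℕ → X → X) (γ : ℝ → X → X) : Set (X → X) :=
  {S | (∃ n k : ℕ, 1 ≤ n ∧ k ≤ n ∧ S = T n k) ∨ ∃ t ∈ Set.Icc (0:ℝ) 1, S = γ t}

/-- Functions of the form `F = f_a · (f_b ∘ T_k ∘ ⋯ ∘ T_1)^q`, `T_i ∈ 𝐓'`,
`a, b ∈ {1,…,d}`, `q ∈ {0,1}`. -/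
def IsFform {d : ℕ} (f : X → Fin d → ℝ) (T' : Set (X → X)) (F : X → ℝ) : Prop :=
  ∃ (a b : Fin d) (q k : ℕ) (S : ℕ → X → X), q ≤ 1 ∧ (∀ i, 1 ≤ i → i ≤ k → S i ∈ T') ∧
    F = fun x => f x a * (f (compSeq S k x) b) ^ q

/-- The family `𝒞` of measures: the smallest family containing `μ` and all `μ̂_t`, `t ∈ [0,1]`,
and closed under pushforward by maps in `𝐓'`. -/
inductive MemC [MeasurableSpace X] (μ : Measure X) (μhat : ℝ → Measure X)
    (T' : Set (X → X)) : Measure X → Prop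
  | base : MemC μ μhat T' μ
  | hat (t : ℝ) (ht : t ∈ Set.Icc (0:ℝ) 1) : MemC μ μhat T' (μhat t)
  | push (ν : Measure X) (S : X → X) (hS : S ∈ T') (hν : MemC μ μhat T' ν) :
      MemC μ μhat T' (ν.map S)

/-- Condition (I): polynomial memory loss / decay of correlations, uniformly over the
family `𝒞` and over compositions of maps from `𝐓'`. -/
def CondI {d : ℕ} [MeasurableSpace X] (T : ℕ → ℕ → X → X) (γ : ℝ → X → X)
    (μ : Measure X) (μhat : ℝ → Measure X) (f : X → Fin d → ℝ)
    (C φ : ℝ) (n₁ : ℕ) : Prop :=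
  ∀ F : X → ℝ, IsFform f (Tprime T γ) F →
    ∀ ν₁ ν₂ : Measure X, MemC μ μhat (Tprime T γ) ν₁ → MemC μ μhat (Tprime T γ) ν₂ →
      ∀ S : ℕ → X → X, (∀ i, 1 ≤ i → S i ∈ Tprime T γ) →
        ∀ n m : ℕ, n + n₁ ≤ m → ∀ (α : Fin d) (p : ℕ), p ≤ 1 →
          |(∫ x, (f (compSeq S n x) α) ^ p * F (compSeq S m x) ∂ν₁) -
              (∫ x, (f (compSeq S n x) α) ^ p ∂ν₁) * ∫ x, F (compSeq S m x) ∂ν₂| ≤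
            C * ((m : ℝ) - (n : ℝ)) ^ (-φ)

/-- Condition (II): perturbation estimates with exponent `ψ`. -/
def CondII {d : ℕ} [MeasurableSpace X] (T : ℕ → ℕ → X → X) (γ : ℝ → X → X)
    (μ : Measure X) (μhat : ℝ → Measure X) (f : X → Fin d → ℝ) (C ψ : ℝ) : Prop :=
  (∀ F : X → ℝ, IsFform f (Tprime T γ) F →
    ∀ ν : Measure X, MemC μ μhat (Tprime T γ) ν →
      ∀ k m n : ℕ, k + m ≤ n → ∀ (α : Fin d) (p : ℕ), p ≤ 1 →
        |∫ x, (f x α) ^ p * (F (rowComp T n m k x) - F (gammaRow γ n m k x)) ∂ν| ≤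
          C * (k : ℝ) * (n : ℝ) ^ (-ψ)) ∧
  (∀ F : X → ℝ, IsFform f (Tprime T γ) F →
    ∀ s ∈ Set.Icc (0:ℝ) 1, ∀ (k : ℕ) (r : ℕ → ℝ),
      (∀ l, 1 ≤ l → l ≤ k → r l ∈ Set.Icc (0:ℝ) 1) →
      ∀ (α : Fin d) (p : ℕ), p ≤ 1 → ∀ M : ℝ, 0 ≤ M → (∀ l, 1 ≤ l → l ≤ k → |s - r l| ≤ M) →
        |∫ x, (f x α) ^ p * (F ((γ s)^[k] x) - F (gammaSeq γ r k x)) ∂(μhat s)| ≤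
          C * (k : ℝ) * M ^ ψ)

/-- The fluctuation process `ξ_n(x,t) = √n ∫_0^t f̄^{n,⌊nr⌋}(x) dr`. -/
def xiQ {d : ℕ} [MeasurableSpace X] (T : ℕ → ℕ → X → X) (μ : Measure X)
    (f : X → Fin d → ℝ) (n : ℕ) (t : ℝ) (x : X) : Fin d → ℝ :=
  fun α => Real.sqrt n * ∫ r in (0:ℝ)..t,
    (f (rowComp T n 0 ⌊(n:ℝ) * r⌋₊ x) α - ∫ y, f (rowComp T n 0 ⌊(n:ℝ) * r⌋₊ y) α ∂μ)

/-- The covariance matrix `Σ_{n,t} = μ[ξ_n(t) ⊗ ξ_n(t)]`. -/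
def SigNt {d : ℕ} [MeasurableSpace X] (T : ℕ → ℕ → X → X) (μ : Measure X)
    (f : X → Fin d → ℝ) (n : ℕ) (t : ℝ) : Matrix (Fin d) (Fin d) ℝ :=
  Matrix.of fun α β => ∫ x, xiQ T μ f n t x α * xiQ T μ f n t x β ∂μ

/-- The centered observable `f̂_{α,t} = f_α − μ̂_t(f_α)`. -/
def fhatQ {d : ℕ} [MeasurableSpace X] (μhat : ℝ → Measure X) (f : X → Fin d → ℝ)
    (α : Fin d) (t : ℝ) (x : X) : ℝ :=
  f x α - ∫ y, f y α ∂(μhat t)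

/-- `Σ̂_t(f)`, defined as the limit (if it exists) of the covariance matrices of the scaled
Birkhoff sums `m^{-1/2} Σ_{k<m} f̂_t ∘ γ_t^k` with respect to `μ̂_t`. -/
def SigHat {d : ℕ} [MeasurableSpace X] (γ : ℝ → X → X) (μhat : ℝ → Measure X)
    (f : X → Fin d → ℝ) (t : ℝ) : Matrix (Fin d) (Fin d) ℝ :=
  Matrix.of fun α β => limUnder atTop (fun m : ℕ =>
    ∫ x, ((Real.sqrt m)⁻¹ * ∑ k ∈ Finset.range m, fhatQ μhat f α t ((γ t)^[k] x)) *
         ((Real.sqrt m)⁻¹ * ∑ k ∈ Finset.range m, fhatQ μhat f β t ((γ t)^[k] x)) ∂(μhat t))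

/-- `Σ_t = ∫_0^t Σ̂_s(f) ds`. -/
def SigT {d : ℕ} [MeasurableSpace X] (γ : ℝ → X → X) (μhat : ℝ → Measure X)
    (f : X → Fin d → ℝ) (t : ℝ) : Matrix (Fin d) (Fin d) ℝ :=
  Matrix.of fun α β => ∫ s in (0:ℝ)..t, SigHat γ μhat f s α β

/-- The standard Gaussian on `ℝ^d`. -/
def stdGaussianPi (d : ℕ) : Measure (Fin d → ℝ) :=
  Measure.pi fun _ => gaussianReal 0 1

/-- The centered `d`-dimensional normal distribution `N(0, S)`
(junk value `0` if `S` is not positive semidefinite). -/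
def gaussianOfMatrix {d : ℕ} (S : Matrix (Fin d) (Fin d) ℝ) : Measure (Fin d → ℝ) :=
  if h : S.PosSemidef then (stdGaussianPi d).map
    (h.1.eigenvectorUnitary.1 * Matrix.diagonal ((√·) ∘ h.1.eigenvalues) *
      (star h.1.eigenvectorUnitary : Matrix (Fin d) (Fin d) ℝ)).mulVec else 0

/-- `Φ_S(h)`: the expectation of `h` with respect to `N(0, S)`. -/
def PhiGauss {d : ℕ} (S : Matrix (Fin d) (Fin d) ℝ) (h : (Fin d → ℝ) → ℝ) : ℝ :=
  ∫ z, h z ∂(gaussianOfMatrix S)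

end


-- ===== auxiliary lemmas =====

section Aux
variable {X : Type*}

lemma compSeq_const (g : X → X) (k : ℕ) : compSeq (fun _ => g) k = g^[k] := by
  induction k with
  | zero => rfl
  | succ k ih => rw [Function.iterate_succ']; simp [compSeq, ih]

lemma gammaSeq_const (γ : ℝ → X → X) (t : ℝ) (k : ℕ) :
    gammaSeq γ (fun _ => t) k = (γ t)^[k] := by
  induction k with
  | zero => rfl
  | succ k ih => rw [Function.iterate_succ']; simp [gammaSeq, ih]

lemma bdd_int [MeasurableSpace X] {ν : MeasureTheory.Measure X} [MeasureTheory.IsFiniteMeasure ν]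
    {g : X → ℝ} {M : ℝ}
    (hg : Measurable g) (hM : ∀ x, |g x| ≤ M) : MeasureTheory.Integrable g ν :=
  (MeasureTheory.integrable_const M).mono' hg.aestronglyMeasurable
    (MeasureTheory.ae_of_all _ (by simpa using hM))

lemma rpow_step {φ : ℝ} (hφ : 1 < φ) {j : ℝ} (hj : 1 ≤ j) :
    (j+1) ^ (-φ) ≤ (j ^ (1-φ) - (j+1) ^ (1-φ)) / (φ-1) := by
  have hp : (0:ℝ) < φ - 1 := by linarith
  have hj0 : (0:ℝ) < j := by linarith
  have hj1 : (0:ℝ) < j + 1 := by linarith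
  rw [le_div_iff₀ hp]
  have key : 1 + (φ-1)/(j+1) ≤ ((j+1)/j) ^ (φ-1) := by
    rcases le_or_gt (φ-1) 1 with hple | hpgt
    · have hs : -1 ≤ -(1/(j+1)) := by
        rw [neg_le_neg_iff, div_le_one hj1]; linarith
      have hbern := rpow_one_add_le_one_add_mul_self hs hp.le hple
      have h1 : (1 : ℝ) + -(1/(j+1)) = j/(j+1) := by field_simp; ring
      rw [h1, mul_neg] at hbern
      have hx : (φ-1) * (1/(j+1)) ≤ 1/2 := by
        have h2 : (1:ℝ)/(j+1) ≤ 1/2 := by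
          rw [div_le_div_iff₀ hj1 (by norm_num)]; linarith
        calc (φ-1) * (1/(j+1)) ≤ 1 * (1/2) := by
              apply mul_le_mul hple h2 (by positivity) (by norm_num)
          _ = 1/2 := by ring
      have hpos2 : (0:ℝ) < 1 - (φ-1) * (1/(j+1)) := by linarith
      have hinv : ((j+1)/j) ^ (φ-1) = ((j/(j+1)) ^ (φ-1))⁻¹ := by
        rw [← Real.inv_rpow (by positivity), inv_div]
      rw [hinv]
      have hp3 : (0:ℝ) < (j/(j+1)) ^ (φ-1) := Real.rpow_pos_of_pos (by positivity) _
      have step1 : 1 + (φ-1)/(j+1) ≤ (1 - (φ-1) * (1/(j+1)))⁻¹ := by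
        rw [inv_eq_one_div, le_div_iff₀ hpos2]
        have hxy : (φ-1)/(j+1) = (φ-1)*(1/(j+1)) := by ring
        rw [hxy]
        nlinarith [sq_nonneg ((φ-1)*(1/(j+1)))]
      refine step1.trans ?_
      apply inv_anti₀ hp3
      linarith
    · have hs : (-1:ℝ) ≤ 1/j := by
        have : (0:ℝ) ≤ 1/j := by positivity
        linarith
      have hbern := one_add_mul_self_le_rpow_one_add hs hpgt.le
      have h1 : (1:ℝ) + 1/j = (j+1)/j := by field_simp
      rw [h1] at hbern
      refine le_trans ?_ hbern
      have h2 : (φ-1)/(j+1) ≤ (φ-1) * (1/j) := by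
        rw [div_eq_mul_one_div]
        apply mul_le_mul_of_nonneg_left _ hp.le
        rw [div_le_div_iff₀ hj1 hj0]; linarith
      linarith
  have e1 : ((j+1)/j:ℝ) ^ (φ-1) = (j/(j+1)) ^ (1-φ) := by
    rw [show ((j+1)/j:ℝ) = (j/(j+1))⁻¹ by rw [inv_div],
      Real.inv_rpow (by positivity), ← Real.rpow_neg (by positivity)]
    ring_nf
  have hrw : (j+1:ℝ) ^ (1-φ) * ((j+1)/j) ^ (φ-1) = j ^ (1-φ) := by
    rw [e1, ← Real.mul_rpow hj1.le (by positivity)]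
    congr 1
    field_simp
  have e3 : (j+1:ℝ) ^ (-φ) = (j+1) ^ (1-φ) * (j+1)⁻¹ := by
    rw [← Real.rpow_neg_one (j+1), ← Real.rpow_add hj1]
    ring_nf
  have hmul := mul_le_mul_of_nonneg_left key (Real.rpow_nonneg hj1.le (1-φ))
  rw [hrw] at hmul
  have expand : (j+1:ℝ) ^ (1-φ) * (1 + (φ-1)/(j+1))
      = (j+1) ^ (1-φ) + (φ-1) * ((j+1) ^ (1-φ) * (j+1)⁻¹) := by
    field_simp
  rw [expand, ← e3] at hmul
  linarith

lemma tail_sum_le {φ : ℝ} (hφ : 1 < φ) {N : ℕ} (hN : 1 ≤ N) (n : ℕ) :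
    ∑ k ∈ Finset.range n, ((k:ℝ) + N + 1) ^ (-φ) ≤ (N:ℝ) ^ (1-φ) / (φ-1) := by
  have hp : (0:ℝ) < φ-1 := by linarith
  have key : ∀ n : ℕ, ∑ k ∈ Finset.range n, ((k:ℝ)+N+1)^(-φ)
      ≤ ((N:ℝ)^(1-φ) - ((n:ℝ)+N)^(1-φ))/(φ-1) := by
    intro n
    induction n with
    | zero => simp
    | succ n ih =>
      rw [Finset.sum_range_succ]
      have hj : (1:ℝ) ≤ (n:ℝ) + N := by
        have h1 : (1:ℝ) ≤ (N:ℝ) := by exact_mod_cast hN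
        have h2 : (0:ℝ) ≤ (n:ℝ) := Nat.cast_nonneg n
        linarith
      have hstep := rpow_step hφ hj
      have hcast : ((n+1:ℕ):ℝ) + (N:ℝ) = (n:ℝ) + (N:ℝ) + 1 := by push_cast; ring
      rw [hcast]
      calc ∑ k ∈ Finset.range n, ((k:ℝ)+N+1)^(-φ) + ((n:ℝ)+N+1)^(-φ)
          ≤ ((N:ℝ)^(1-φ) - ((n:ℝ)+N)^(1-φ))/(φ-1)
            + (((n:ℝ)+N)^(1-φ) - ((n:ℝ)+N+1)^(1-φ))/(φ-1) := add_le_add ih hstep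
        _ = ((N:ℝ)^(1-φ) - ((n:ℝ)+N+1)^(1-φ))/(φ-1) := by
            rw [← add_div]; congr 1; ring
  refine (key n).trans ?_
  have hv : (0:ℝ) ≤ ((n:ℝ)+N)^(1-φ) := Real.rpow_nonneg (by positivity) _
  have hle : (N:ℝ)^(1-φ) - ((n:ℝ)+N)^(1-φ) ≤ (N:ℝ)^(1-φ) := by linarith
  exact div_le_div_of_nonneg_right hle hp.le

lemma summable_shift {φ : ℝ} (hφ : 1 < φ) (N : ℕ) :
    Summable (fun k : ℕ => ((k:ℝ)+N+1)^(-φ)) := by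
  have h := Real.summable_nat_rpow.mpr (by linarith : -φ < -1)
  have h2 := (summable_nat_add_iff (N+1)).mpr h
  refine h2.congr fun k => ?_
  push_cast
  ring_nf

/-- The correlation function. -/
noncomputable
def Qcorr {X : Type*} {d : ℕ} [MeasurableSpace X] (γ : ℝ → X → X) (μhat : ℝ → MeasureTheory.Measure X)
    (f : X → Fin d → ℝ) (a b : Fin d) (t : ℝ) (k : ℕ) : ℝ :=
  ∫ x, fhatQ μhat f a t x * fhatQ μhat f b t ((γ t)^[k] x) ∂(μhat t)

end Aux

set_option maxHeartbeats 2000000 in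
/-- **Lemma 4.3, second part**: under conditions (I) and (II), each entry
`t ↦ (Σ̂_t)_{αβ}(f)` is Hölder continuous on `[0,1]` with exponent `ψ(φ−1)/(φ+1)`. -/
theorem qds_limit_covariance_holder
    {X : Type*} [MeasurableSpace X] [TopologicalSpace (X → X)] {d : ℕ}
    (T : ℕ → ℕ → X → X) (γ : ℝ → X → X) (μ : Measure X) (μhat : ℝ → Measure X)
    (f : X → Fin d → ℝ)
    (hμP : IsProbabilityMeasure μ) (hμhatP : ∀ t, IsProbabilityMeasure (μhat t))
    (hT : ∀ n k, Measurable (T n k)) (hγ : ∀ t, Measurable (γ t))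
    (hinv : ∀ t ∈ Set.Icc (0:ℝ) 1, (μhat t).map (γ t) = μhat t)
    (hf : Measurable f) (B : ℝ) (hfB : ∀ x α, |f x α| ≤ B)
    (hQDS : ∀ t ∈ Set.Icc (0:ℝ) 1,
      Tendsto (fun n : ℕ => T n ⌊(n:ℝ) * t⌋₊) atTop (nhds (γ t)))
    (C₀ φ ψ : ℝ) (n₁ : ℕ) (hC₀ : 0 < C₀) (hφ : 1 < φ) (hn₁ : 1 ≤ n₁)
    (hψ : ψ ∈ Set.Ioc (0:ℝ) 1)
    (hI : CondI T γ μ μhat f C₀ φ n₁) (hII : CondII T γ μ μhat f C₀ ψ) :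
    ∀ α β : Fin d, ∃ C : ℝ, 0 ≤ C ∧
      ∀ s ∈ Set.Icc (0:ℝ) 1, ∀ t ∈ Set.Icc (0:ℝ) 1,
        |SigHat γ μhat f t α β - SigHat γ μhat f s α β| ≤
          C * |t - s| ^ (ψ * (φ - 1) / (φ + 1)) := by
  intro α β
  have hψ0 : 0 < ψ := hψ.1
  have hψ1 : ψ ≤ 1 := hψ.2
  haveI := hμP
  have hfa : ∀ a : Fin d, Measurable fun x => f x a :=
    fun a => (measurable_pi_apply a).comp hf
  have hTm : ∀ S ∈ Tprime T γ, Measurable S := by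
    rintro S (⟨n, k, -, -, rfl⟩ | ⟨t, -, rfl⟩)
    exacts [hT n k, hγ t]
  have hB0 : 0 ≤ B := by
    have hne : Nonempty X := by
      by_contra hc
      rw [not_nonempty_iff] at hc
      have h1 := hμP.measure_univ
      rw [Set.univ_eq_empty_iff.mpr hc, measure_empty] at h1
      exact zero_ne_one h1
    obtain ⟨x⟩ := hne
    exact (abs_nonneg _).trans (hfB x α)
  -- invariance of μhat t under iterates of γ t
  have hInv : ∀ t ∈ Set.Icc (0:ℝ) 1, ∀ g : X → ℝ, Measurable g → ∀ k : ℕ,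
      ∫ x, g ((γ t)^[k] x) ∂(μhat t) = ∫ x, g x ∂(μhat t) := by
    intro t ht g hg k
    induction k with
    | zero => simp
    | succ k ih =>
      have h1 : ∫ x, g ((γ t)^[k] ((γ t) x)) ∂(μhat t)
          = ∫ x, g ((γ t)^[k] x) ∂(μhat t) := by
        conv_rhs => rw [← hinv t ht]
        exact (integral_map (hγ t).aemeasurable
          ((hg.comp ((hγ t).iterate k)).aestronglyMeasurable)).symm
      calc ∫ x, g ((γ t)^[k+1] x) ∂(μhat t)
          = ∫ x, g ((γ t)^[k] ((γ t) x)) ∂(μhat t) := by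
            simp only [Function.iterate_succ_apply]
        _ = ∫ x, g ((γ t)^[k] x) ∂(μhat t) := h1
        _ = _ := ih
  have hmean : ∀ (t : ℝ) (a : Fin d), |∫ y, f y a ∂(μhat t)| ≤ B := by
    intro t a
    haveI := hμhatP t
    calc |∫ y, f y a ∂(μhat t)| ≤ B * ((μhat t) Set.univ).toReal := by
          rw [← Real.norm_eq_abs]
          exact norm_integral_le_of_norm_le_const
            (ae_of_all _ fun x => by rw [Real.norm_eq_abs]; exact hfB x a)
      _ = B := by simp
  have hfhatB : ∀ (t : ℝ) (a : Fin d) (x : X), |fhatQ μhat f a t x| ≤ 2*B := by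
    intro t a x
    have h1 := hfB x a
    have h2 := hmean t a
    calc |fhatQ μhat f a t x| ≤ |f x a| + |∫ y, f y a ∂(μhat t)| := abs_sub _ _
      _ ≤ 2*B := by linarith
  have hfhatm : ∀ (t : ℝ) (a : Fin d), Measurable (fhatQ μhat f a t) :=
    fun t a => (hfa a).sub measurable_const
  have hFform : ∀ t ∈ Set.Icc (0:ℝ) 1, ∀ (a b : Fin d) (qq k : ℕ), qq ≤ 1 →
      IsFform f (Tprime T γ) (fun x => f x a * (f ((γ t)^[k] x) b) ^ qq) :=
    fun t ht a b qq k hqq =>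
      ⟨a, b, qq, k, fun _ => γ t, hqq, fun i _ _ => Or.inr ⟨t, ht, rfl⟩,
        by rw [compSeq_const]⟩
  -- Key estimate from condition (I)+(II): Hölder dependence of ∫ F_t dμhat_· on the measure
  have hKeyI : ∀ s ∈ Set.Icc (0:ℝ) 1, ∀ t ∈ Set.Icc (0:ℝ) 1,
      ∀ (a b : Fin d) (qq k : ℕ), qq ≤ 1 → ∀ m : ℕ, n₁ ≤ m →
      |(∫ x, f x a * (f ((γ t)^[k] x) b) ^ qq ∂(μhat t))
          - ∫ x, f x a * (f ((γ t)^[k] x) b) ^ qq ∂(μhat s)|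
        ≤ C₀ * (m:ℝ) ^ (-φ) + C₀ * m * |t - s| ^ ψ := by
    intro s hs t ht a b qq k hqq m hm
    haveI := hμhatP t; haveI := hμhatP s
    set F : X → ℝ := fun x => f x a * (f ((γ t)^[k] x) b) ^ qq with hF
    have hFmeas : Measurable F :=
      (hfa a).mul (((hfa b).comp ((hγ t).iterate k)).pow_const qq)
    have hFb : ∀ x, |F x| ≤ B * (B+1) := by
      intro x
      rw [hF]
      simp only []
      rw [abs_mul, abs_pow]
      have h1 : |f x a| ≤ B := hfB x a
      have h2 : |f ((γ t)^[k] x) b| ^ qq ≤ B + 1 := by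
        interval_cases qq
        · simpa using by linarith
        · simpa using (hfB _ b).trans (by linarith)
      exact mul_le_mul h1 h2 (by positivity) hB0
    have e1 : ∫ x, F x ∂(μhat t) = ∫ x, F ((γ t)^[m] x) ∂(μhat t) :=
      (hInv t ht F hFmeas m).symm
    have e4 : ∫ x, F x ∂(μhat s) = ∫ x, F ((γ s)^[m] x) ∂(μhat s) :=
      (hInv s hs F hFmeas m).symm
    have hIf := hI F (hFform t ht a b qq k hqq) (μhat t) (μhat s)
      (MemC.hat t ht) (MemC.hat s hs)
      (fun _ => γ t) (fun i _ => Or.inr ⟨t, ht, rfl⟩) 0 m (by omega) α 0 (by norm_num)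
    simp only [compSeq_const, pow_zero, one_mul, integral_const, measure_univ,
      ENNReal.toReal_one, probReal_univ, smul_eq_mul, mul_one, Nat.cast_zero, sub_zero] at hIf
    have hIIf := hII.2 F (hFform t ht a b qq k hqq) s hs m (fun _ => t)
      (fun l _ _ => ht) α 0 (by norm_num) |t-s| (abs_nonneg _)
      (fun l _ _ => by rw [abs_sub_comm])
    simp only [gammaSeq_const, pow_zero, one_mul] at hIIf
    have hint1 : Integrable (fun x => F ((γ s)^[m] x)) (μhat s) :=
      bdd_int (hFmeas.comp ((hγ s).iterate m)) (fun x => hFb _)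
    have hint2 : Integrable (fun x => F ((γ t)^[m] x)) (μhat s) :=
      bdd_int (hFmeas.comp ((hγ t).iterate m)) (fun x => hFb _)
    rw [integral_sub hint1 hint2] at hIIf
    rw [e1, e4]
    calc |(∫ x, F ((γ t)^[m] x) ∂(μhat t)) - ∫ x, F ((γ s)^[m] x) ∂(μhat s)|
        = |((∫ x, F ((γ t)^[m] x) ∂(μhat t)) - ∫ x, F ((γ t)^[m] x) ∂(μhat s))
            + ((∫ x, F ((γ t)^[m] x) ∂(μhat s)) - ∫ x, F ((γ s)^[m] x) ∂(μhat s))| := by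
          ring_nf
      _ ≤ |(∫ x, F ((γ t)^[m] x) ∂(μhat t)) - ∫ x, F ((γ t)^[m] x) ∂(μhat s)|
            + |(∫ x, F ((γ t)^[m] x) ∂(μhat s)) - ∫ x, F ((γ s)^[m] x) ∂(μhat s)| :=
          abs_add_le _ _
      _ ≤ C₀ * (m:ℝ) ^ (-φ) + C₀ * m * |t - s| ^ ψ := by
          refine add_le_add hIf ?_
          rw [abs_sub_comm]
          exact hIIf
  -- Key estimate from condition (II): moving the dynamics
  have hKeyII : ∀ s ∈ Set.Icc (0:ℝ) 1, ∀ t ∈ Set.Icc (0:ℝ) 1, ∀ (a b : Fin d) (k : ℕ),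
      |∫ x, f x a * (f ((γ t)^[k] x) b - f ((γ s)^[k] x) b) ∂(μhat s)|
        ≤ C₀ * k * |t - s| ^ ψ := by
    intro s hs t ht a b k
    haveI := hμhatP s
    have hIIf := hII.2 (fun x => f x b * (f ((γ t)^[0] x) b) ^ 0)
      (hFform t ht b b 0 0 (by norm_num)) s hs k (fun _ => t)
      (fun l _ _ => ht) a 1 le_rfl |t-s| (abs_nonneg _)
      (fun l _ _ => by rw [abs_sub_comm])
    simp only [gammaSeq_const, pow_zero, mul_one, pow_one] at hIIf
    have heq : (fun x => f x a * (f ((γ t)^[k] x) b - f ((γ s)^[k] x) b))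
        = fun x => -(f x a * (f ((γ s)^[k] x) b - f ((γ t)^[k] x) b)) := by
      funext x; ring
    rw [heq, integral_neg, abs_neg]
    exact hIIf
  -- expansion of the correlation function
  have hQexp : ∀ t ∈ Set.Icc (0:ℝ) 1, ∀ (a b : Fin d) (k : ℕ),
      Qcorr γ μhat f a b t k = (∫ x, f x a * f ((γ t)^[k] x) b ∂(μhat t))
        - (∫ y, f y a ∂(μhat t)) * (∫ y, f y b ∂(μhat t)) := by
    intro t ht a b k
    haveI := hμhatP t
    unfold Qcorr fhatQ
    set A := ∫ y, f y a ∂(μhat t) with hA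
    set Bb := ∫ y, f y b ∂(μhat t) with hBb
    have hint1 : Integrable (fun x => f x a * f ((γ t)^[k] x) b) (μhat t) :=
      bdd_int ((hfa a).mul ((hfa b).comp ((hγ t).iterate k)))
        (fun x => by
          rw [abs_mul]
          exact mul_le_mul (hfB x a) (hfB _ b) (abs_nonneg _) hB0)
    have hint2 : Integrable (fun x => A * f ((γ t)^[k] x) b) (μhat t) :=
      (bdd_int ((hfa b).comp ((hγ t).iterate k)) (fun x => hfB _ b)).const_mul A
    have hint3 : Integrable (fun x => Bb * f x a) (μhat t) :=
      (bdd_int (hfa a) (fun x => hfB x a)).const_mul Bb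
    have heq : (fun x => (f x a - A) * (f ((γ t)^[k] x) b - Bb))
        = fun x => (f x a * f ((γ t)^[k] x) b - A * f ((γ t)^[k] x) b)
            - (Bb * f x a - A * Bb) := by
      funext x; ring
    have hint12 : Integrable (fun x => f x a * f ((γ t)^[k] x) b
        - A * f ((γ t)^[k] x) b) (μhat t) := hint1.sub hint2
    have hint34 : Integrable (fun x => Bb * f x a - A * Bb) (μhat t) :=
      hint3.sub (integrable_const _)
    rw [heq, integral_sub hint12 hint34,
      integral_sub hint1 hint2, integral_sub hint3 (integrable_const _),
      integral_const, integral_const_mul, integral_const_mul]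
    rw [hInv t ht (fun y => f y b) (hfa b) k]
    simp only [measure_univ, ENNReal.toReal_one, probReal_univ, smul_eq_mul, one_mul]
    rw [← hA, ← hBb]
    ring
  -- decay of correlations
  have hQdecay : ∀ t ∈ Set.Icc (0:ℝ) 1, ∀ (a b : Fin d), ∀ k : ℕ, n₁ ≤ k →
      |Qcorr γ μhat f a b t k| ≤ C₀ * (k:ℝ) ^ (-φ) := by
    intro t ht a b k hk
    haveI := hμhatP t
    have hFf : IsFform f (Tprime T γ) (fun x => f x b) :=
      ⟨b, b, 0, 0, fun _ => γ t, by norm_num, fun i _ _ => Or.inr ⟨t, ht, rfl⟩,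
        by funext x; simp⟩
    have hIf := hI (fun x => f x b) hFf (μhat t) (μhat t)
      (MemC.hat t ht) (MemC.hat t ht)
      (fun _ => γ t) (fun i _ => Or.inr ⟨t, ht, rfl⟩) 0 k (by omega) a 1 le_rfl
    simp only [compSeq_const, pow_one, Function.iterate_zero, id_eq,
      Nat.cast_zero, sub_zero] at hIf
    rw [hInv t ht (fun y => f y b) (hfa b) k] at hIf
    rw [hQexp t ht a b k]
    exact hIf
  -- trivial bound on correlations
  have hQbdd : ∀ (t : ℝ) (a b : Fin d) (k : ℕ),
      |Qcorr γ μhat f a b t k| ≤ (2*B) * (2*B) := by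
    intro t a b k
    haveI := hμhatP t
    calc |Qcorr γ μhat f a b t k| ≤ (2*B) * (2*B) * ((μhat t) Set.univ).toReal := by
          rw [← Real.norm_eq_abs]
          refine norm_integral_le_of_norm_le_const (ae_of_all _ fun x => ?_)
          rw [Real.norm_eq_abs, abs_mul]
          exact mul_le_mul (hfhatB t a x) (hfhatB t b _) (abs_nonneg _) (by linarith)
      _ = (2*B) * (2*B) := by simp
  -- Hölder continuity of each correlation
  have hQdiff : ∀ s ∈ Set.Icc (0:ℝ) 1, ∀ t ∈ Set.Icc (0:ℝ) 1,
      ∀ (a b : Fin d) (k : ℕ), ∀ m : ℕ, n₁ ≤ m →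
      |Qcorr γ μhat f a b t k - Qcorr γ μhat f a b s k|
        ≤ C₀*(k:ℝ)*|t-s|^ψ + (1+2*B)*(C₀*(m:ℝ)^(-φ) + C₀*(m:ℝ)*|t-s|^ψ) := by
    intro s hs t ht a b k m hm
    haveI := hμhatP s; haveI := hμhatP t
    rw [hQexp t ht a b k, hQexp s hs a b k]
    set Gt := ∫ x, f x a * f ((γ t)^[k] x) b ∂(μhat t) with hGt
    set Gts := ∫ x, f x a * f ((γ t)^[k] x) b ∂(μhat s) with hGts
    set Gs := ∫ x, f x a * f ((γ s)^[k] x) b ∂(μhat s) with hGs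
    set At := ∫ y, f y a ∂(μhat t) with hAt
    set As := ∫ y, f y a ∂(μhat s) with hAs
    set Bt := ∫ y, f y b ∂(μhat t) with hBt
    set Bs := ∫ y, f y b ∂(μhat s) with hBs
    have h1 : |Gt - Gts| ≤ C₀ * (m:ℝ)^(-φ) + C₀*(m:ℝ)*|t-s|^ψ := by
      have := hKeyI s hs t ht a b 1 k le_rfl m hm
      simp only [pow_one] at this
      rw [hGt, hGts]
      exact this
    have h2 : |Gts - Gs| ≤ C₀ * (k:ℝ) * |t-s|^ψ := by
      have hintt : Integrable (fun x => f x a * f ((γ t)^[k] x) b) (μhat s) :=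
        bdd_int ((hfa a).mul ((hfa b).comp ((hγ t).iterate k)))
          (fun x => by
            rw [abs_mul]
            exact mul_le_mul (hfB x a) (hfB _ b) (abs_nonneg _) hB0)
      have hints : Integrable (fun x => f x a * f ((γ s)^[k] x) b) (μhat s) :=
        bdd_int ((hfa a).mul ((hfa b).comp ((hγ s).iterate k)))
          (fun x => by
            rw [abs_mul]
            exact mul_le_mul (hfB x a) (hfB _ b) (abs_nonneg _) hB0)
      have hsub : Gts - Gs
          = ∫ x, f x a * (f ((γ t)^[k] x) b - f ((γ s)^[k] x) b) ∂(μhat s) := by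
        rw [hGts, hGs, ← integral_sub hintt hints]
        congr 1
        funext x
        ring
      rw [hsub]
      exact hKeyII s hs t ht a b k
    have h3 : |At - As| ≤ C₀ * (m:ℝ)^(-φ) + C₀*(m:ℝ)*|t-s|^ψ := by
      have := hKeyI s hs t ht a b 0 0 (by norm_num) m hm
      simp only [pow_zero, mul_one] at this
      rw [hAt, hAs]
      exact this
    have h4 : |Bt - Bs| ≤ C₀ * (m:ℝ)^(-φ) + C₀*(m:ℝ)*|t-s|^ψ := by
      have := hKeyI s hs t ht b b 0 0 (by norm_num) m hm
      simp only [pow_zero, mul_one] at this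
      rw [hBt, hBs]
      exact this
    have h5 : |At*Bt - As*Bs| ≤ B*(C₀*(m:ℝ)^(-φ) + C₀*(m:ℝ)*|t-s|^ψ)
        + B*(C₀*(m:ℝ)^(-φ) + C₀*(m:ℝ)*|t-s|^ψ) := by
      have e : At*Bt - As*Bs = At*(Bt - Bs) + Bs*(At - As) := by ring
      rw [e]
      refine (abs_add_le _ _).trans (add_le_add ?_ ?_)
      · rw [abs_mul]
        exact mul_le_mul (hmean t a) h4 (abs_nonneg _) hB0
      · rw [abs_mul]
        exact mul_le_mul (hmean s b) h3 (abs_nonneg _) hB0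
    have tri : |(Gt - At*Bt) - (Gs - As*Bs)|
        ≤ |Gt - Gts| + |Gts - Gs| + |At*Bt - As*Bs| := by
      have e : (Gt - At*Bt) - (Gs - As*Bs)
          = ((Gt - Gts) + (Gts - Gs)) + -(At*Bt - As*Bs) := by ring
      rw [e]
      refine (abs_add_le _ _).trans ?_
      rw [abs_neg]
      exact add_le_add (abs_add_le _ _) le_rfl
    calc |(Gt - At*Bt) - (Gs - As*Bs)|
        ≤ |Gt - Gts| + |Gts - Gs| + |At*Bt - As*Bs| := tri
      _ ≤ C₀*(k:ℝ)*|t-s|^ψ + (1+2*B)*(C₀*(m:ℝ)^(-φ) + C₀*(m:ℝ)*|t-s|^ψ) := by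
          nlinarith [h1, h2, h5]
  -- summable bound
  have hD1 : ∀ t ∈ Set.Icc (0:ℝ) 1, ∀ (a b : Fin d) (k : ℕ),
      |Qcorr γ μhat f a b t (k+1)|
        ≤ (C₀ + (2*B)*(2*B)*(n₁:ℝ)^φ) * ((k:ℝ)+1)^(-φ) := by
    intro t ht a b k
    have hn₁R : (0:ℝ) < (n₁:ℝ) := by
      exact_mod_cast Nat.lt_of_lt_of_le Nat.zero_lt_one hn₁
    have hkpos : (0:ℝ) ≤ ((k:ℝ)+1)^(-φ) := Real.rpow_nonneg (by positivity) _
    rcases le_or_gt n₁ (k+1) with h | h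
    · refine (hQdecay t ht a b (k+1) h).trans ?_
      have hcast : ((k+1:ℕ):ℝ) = (k:ℝ)+1 := by push_cast; ring
      rw [hcast]
      refine mul_le_mul_of_nonneg_right ?_ hkpos
      have : (0:ℝ) ≤ (2*B)*(2*B)*(n₁:ℝ)^φ := by positivity
      linarith
    · refine (hQbdd t a b (k+1)).trans ?_
      have h1 : ((k:ℝ)+1) ≤ (n₁:ℝ) := by exact_mod_cast h.le
      have h2 : (n₁:ℝ)^(-φ) ≤ ((k:ℝ)+1)^(-φ) :=
        Real.rpow_le_rpow_of_nonpos (by positivity) h1 (by linarith)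
      have h3 : (n₁:ℝ)^φ * (n₁:ℝ)^(-φ) = 1 := by
        rw [← Real.rpow_add hn₁R]
        simp
      calc (2*B)*(2*B) = ((2*B)*(2*B)*(n₁:ℝ)^φ) * (n₁:ℝ)^(-φ) := by
            rw [mul_assoc (2*B*(2*B)) ((n₁:ℝ)^φ) ((n₁:ℝ)^(-φ)), h3, mul_one]
        _ ≤ ((2*B)*(2*B)*(n₁:ℝ)^φ) * (((k:ℝ)+1)^(-φ)) :=
            mul_le_mul_of_nonneg_left h2 (by positivity)
        _ ≤ (C₀ + (2*B)*(2*B)*(n₁:ℝ)^φ) * ((k:ℝ)+1)^(-φ) := by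
            refine mul_le_mul_of_nonneg_right ?_ hkpos
            linarith
  have hn₁R : (0:ℝ) < (n₁:ℝ) := by exact_mod_cast Nat.lt_of_lt_of_le Nat.zero_lt_one hn₁
  have hsummable_base : Summable (fun k : ℕ => ((k:ℝ)+1)^(-φ)) := by
    have h := Real.summable_nat_rpow.mpr (by linarith : -φ < -1)
    have h2 := (summable_nat_add_iff 1).mpr h
    refine h2.congr fun k => ?_
    push_cast
    ring_nf
  have hQsum : ∀ t ∈ Set.Icc (0:ℝ) 1, ∀ (a b : Fin d),
      Summable (fun k : ℕ => Qcorr γ μhat f a b t (k+1)) := by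
    intro t ht a b
    refine Summable.of_norm_bounded (hsummable_base.mul_left (C₀ + (2*B)*(2*B)*(n₁:ℝ)^φ))
      (fun k => ?_)
    rw [Real.norm_eq_abs]
    exact hD1 t ht a b k
  -- identification of SigHat with the correlation series
  have hSigEq : ∀ t ∈ Set.Icc (0:ℝ) 1, SigHat γ μhat f t α β
      = Qcorr γ μhat f α β t 0
        + ∑' k : ℕ, (Qcorr γ μhat f α β t (k+1) + Qcorr γ μhat f β α t (k+1)) := by
    intro t ht
    haveI := hμhatP t
    set R : ℕ → ℕ → ℝ := fun j l =>
      ∫ x, fhatQ μhat f α t ((γ t)^[j] x) * fhatQ μhat f β t ((γ t)^[l] x) ∂(μhat t)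
      with hR
    have hint_prod : ∀ (a b : Fin d) (j l : ℕ),
        Integrable (fun x => fhatQ μhat f a t ((γ t)^[j] x)
          * fhatQ μhat f b t ((γ t)^[l] x)) (μhat t) := by
      intro a b j l
      refine bdd_int (M := 2*B*(2*B)) (((hfhatm t a).comp ((hγ t).iterate j)).mul
        ((hfhatm t b).comp ((hγ t).iterate l))) (fun x => ?_)
      rw [abs_mul]
      exact mul_le_mul (hfhatB t a _) (hfhatB t b _) (abs_nonneg _) (by linarith)
    have hRQ1 : ∀ j l, j ≤ l → R j l = Qcorr γ μhat f α β t (l - j) := by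
      intro j l hjl
      have h1 := hInv t ht
        (fun y => fhatQ μhat f α t y * fhatQ μhat f β t ((γ t)^[l-j] y))
        ((hfhatm t α).mul ((hfhatm t β).comp ((hγ t).iterate (l-j)))) j
      calc R j l = ∫ x, fhatQ μhat f α t ((γ t)^[j] x)
            * fhatQ μhat f β t ((γ t)^[l-j] ((γ t)^[j] x)) ∂(μhat t) := by
            simp only [hR]
            congr 1
            funext x
            congr 2
            rw [← Function.iterate_add_apply, Nat.sub_add_cancel hjl]
        _ = ∫ y, fhatQ μhat f α t y * fhatQ μhat f β t ((γ t)^[l-j] y) ∂(μhat t) := h1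
        _ = Qcorr γ μhat f α β t (l-j) := rfl
    have hRQ2 : ∀ j l, l ≤ j → R j l = Qcorr γ μhat f β α t (j - l) := by
      intro j l hlj
      have h1 := hInv t ht
        (fun y => fhatQ μhat f β t y * fhatQ μhat f α t ((γ t)^[j-l] y))
        ((hfhatm t β).mul ((hfhatm t α).comp ((hγ t).iterate (j-l)))) l
      calc R j l = ∫ x, fhatQ μhat f β t ((γ t)^[l] x)
            * fhatQ μhat f α t ((γ t)^[j-l] ((γ t)^[l] x)) ∂(μhat t) := by
            simp only [hR]
            congr 1
            funext x
            rw [mul_comm]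
            congr 2
            rw [← Function.iterate_add_apply, Nat.sub_add_cancel hlj]
        _ = ∫ y, fhatQ μhat f β t y * fhatQ μhat f α t ((γ t)^[j-l] y) ∂(μhat t) := h1
        _ = Qcorr γ μhat f β α t (j-l) := rfl
    set P : ℕ → ℝ := fun i => Qcorr γ μhat f α β t 0
      + ∑ k ∈ Finset.range i, (Qcorr γ μhat f α β t (k+1) + Qcorr γ μhat f β α t (k+1))
      with hP
    have hW : ∀ m : ℕ, ∑ j ∈ Finset.range m, ∑ l ∈ Finset.range m, R j l
        = ∑ i ∈ Finset.range m, P i := by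
      intro m
      induction m with
      | zero => simp
      | succ m ih =>
        have e : ∑ j ∈ Finset.range (m+1), ∑ l ∈ Finset.range (m+1), R j l
            = ((∑ j ∈ Finset.range m, ∑ l ∈ Finset.range m, R j l)
              + (∑ l ∈ Finset.range m, R m l))
              + ((∑ j ∈ Finset.range m, R j m) + R m m) := by
          rw [Finset.sum_range_succ]
          simp only [Finset.sum_range_succ]
          rw [Finset.sum_add_distrib]
          ring
        rw [e, ih, Finset.sum_range_succ]
        have er1 : ∑ l ∈ Finset.range m, R m l
            = ∑ k ∈ Finset.range m, Qcorr γ μhat f β α t (k+1) := by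
          rw [← Finset.sum_range_reflect]
          apply Finset.sum_congr rfl
          intro j hj
          rw [hRQ2 m (m-1-j) (by omega)]
          congr 1
          rw [Finset.mem_range] at hj
          omega
        have er2 : ∑ j ∈ Finset.range m, R j m
            = ∑ k ∈ Finset.range m, Qcorr γ μhat f α β t (k+1) := by
          rw [← Finset.sum_range_reflect]
          apply Finset.sum_congr rfl
          intro j hj
          rw [hRQ1 (m-1-j) m (by omega)]
          congr 1
          rw [Finset.mem_range] at hj
          omega
        have er3 : R m m = Qcorr γ μhat f α β t 0 := by
          rw [hRQ1 m m le_rfl, Nat.sub_self]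
        rw [er1, er2, er3, hP]
        simp only [Finset.sum_add_distrib]
        ring
    have hu : ∀ m : ℕ,
        (∫ x, ((Real.sqrt m)⁻¹
            * ∑ k ∈ Finset.range m, fhatQ μhat f α t ((γ t)^[k] x))
          * ((Real.sqrt m)⁻¹
            * ∑ k ∈ Finset.range m, fhatQ μhat f β t ((γ t)^[k] x)) ∂(μhat t))
        = ((m:ℝ))⁻¹ * ∑ i ∈ Finset.range m, P i := by
      intro m
      rw [← hW m]
      have hc : (Real.sqrt m)⁻¹ * (Real.sqrt m)⁻¹ = ((m:ℝ))⁻¹ := by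
        rw [← mul_inv, Real.mul_self_sqrt (Nat.cast_nonneg m)]
      have e0 : (fun x => ((Real.sqrt m)⁻¹
            * ∑ k ∈ Finset.range m, fhatQ μhat f α t ((γ t)^[k] x))
          * ((Real.sqrt m)⁻¹
            * ∑ k ∈ Finset.range m, fhatQ μhat f β t ((γ t)^[k] x)))
          = fun x => ((m:ℝ))⁻¹
            * ∑ j ∈ Finset.range m, ∑ l ∈ Finset.range m,
              fhatQ μhat f α t ((γ t)^[j] x) * fhatQ μhat f β t ((γ t)^[l] x) := by
        funext x
        rw [← Finset.sum_mul_sum]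
        rw [← hc]
        ring
      rw [e0, integral_const_mul]
      congr 1
      rw [integral_finset_sum _ (fun j _ =>
        integrable_finset_sum _ (fun l _ => hint_prod α β j l))]
      exact Finset.sum_congr rfl fun j _ =>
        integral_finset_sum _ (fun l _ => hint_prod α β j l)
    have hsum : Summable (fun k : ℕ =>
        Qcorr γ μhat f α β t (k+1) + Qcorr γ μhat f β α t (k+1)) :=
      (hQsum t ht α β).add (hQsum t ht β α)
    have hPlim : Tendsto P atTop (nhds (Qcorr γ μhat f α β t 0
        + ∑' k : ℕ, (Qcorr γ μhat f α β t (k+1) + Qcorr γ μhat f β α t (k+1)))) := by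
      rw [hP]
      exact Tendsto.const_add _ hsum.hasSum.tendsto_sum_nat
    have hfin : Tendsto (fun m : ℕ =>
        ∫ x, ((Real.sqrt m)⁻¹
            * ∑ k ∈ Finset.range m, fhatQ μhat f α t ((γ t)^[k] x))
          * ((Real.sqrt m)⁻¹
            * ∑ k ∈ Finset.range m, fhatQ μhat f β t ((γ t)^[k] x)) ∂(μhat t))
        atTop (nhds (Qcorr γ μhat f α β t 0
        + ∑' k : ℕ, (Qcorr γ μhat f α β t (k+1) + Qcorr γ μhat f β α t (k+1)))) :=
      (hPlim.cesaro).congr (fun m => (hu m).symm)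
    simp only [SigHat, Matrix.of_apply]
    exact hfin.limUnder_eq
  -- final assembly
  have hφ1 : (0:ℝ) < φ - 1 := by linarith
  have hφ2 : (0:ℝ) < φ + 1 := by linarith
  have hD₂0 : (0:ℝ) < (2+2*B)*C₀ := mul_pos (by linarith) hC₀
  have hCfin0 : (0:ℝ) ≤ 3*((2+2*B)*C₀)*((n₁:ℝ)+2)^2 + 3*((2+2*B)*C₀) + 4*C₀/(φ-1) := by
    have h1 : (0:ℝ) ≤ 3*((2+2*B)*C₀)*((n₁:ℝ)+2)^2 := by positivity
    have h2 : (0:ℝ) ≤ 4*C₀/(φ-1) := div_nonneg (by linarith) hφ1.le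
    nlinarith [hD₂0]
  refine ⟨3*((2+2*B)*C₀)*((n₁:ℝ)+2)^2 + 3*((2+2*B)*C₀) + 4*C₀/(φ-1), hCfin0, ?_⟩
  intro s hs t ht
  have hθpos : 0 < ψ * (φ - 1) / (φ + 1) := div_pos (mul_pos hψ0 hφ1) hφ2
  rw [hSigEq t ht, hSigEq s hs]
  rcases eq_or_lt_of_le (abs_nonneg (t-s)) with h0 | hpos
  · have hts : t = s := by
      rw [← sub_eq_zero]
      exact abs_eq_zero.mp h0.symm
    rw [hts]
    simp [Real.zero_rpow hθpos.ne']
  · have hh1 : |t - s| ≤ 1 := by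
      rw [abs_le]
      constructor <;> [linarith [hs.1, hs.2, ht.1, ht.2]; linarith [hs.1, hs.2, ht.1, ht.2]]
    have hhψ : (0:ℝ) ≤ |t-s|^ψ := Real.rpow_nonneg (abs_nonneg _) _
    set z := |t - s| ^ (-ψ/(φ+1)) with hz
    have hz1 : 1 ≤ z := by
      rw [hz]
      exact Real.one_le_rpow_of_pos_of_le_one_of_nonpos hpos hh1
        (div_nonpos_of_nonpos_of_nonneg (by linarith) hφ2.le)
    set N := n₁ + ⌈z⌉₊ with hN
    have hNn₁ : n₁ ≤ N := Nat.le_add_right _ _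
    have hN1 : 1 ≤ N := le_trans hn₁ hNn₁
    have hNR0 : (0:ℝ) < (N:ℝ) := by exact_mod_cast Nat.lt_of_lt_of_le Nat.zero_lt_one hN1
    have hNφ : (0:ℝ) ≤ (N:ℝ)^(-φ) := Real.rpow_nonneg hNR0.le _
    have hzN : z ≤ (N:ℝ) := by
      calc z ≤ (⌈z⌉₊:ℝ) := Nat.le_ceil z
        _ ≤ (N:ℝ) := by exact_mod_cast Nat.le_add_left _ _
    have hNz : (N:ℝ) ≤ ((n₁:ℝ)+2)*z := by
      have hceil : (⌈z⌉₊:ℝ) < z + 1 := Nat.ceil_lt_add_one (by linarith)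
      have he : (N:ℝ) = (n₁:ℝ) + (⌈z⌉₊:ℝ) := by rw [hN]; push_cast; ring
      have hn₁1 : (1:ℝ) ≤ (n₁:ℝ) := by exact_mod_cast hn₁
      rw [he]
      nlinarith [hz1]
    -- uniform estimate for gaps up to N
    have hgap : ∀ (a b : Fin d) (gap : ℕ), gap ≤ N →
        |Qcorr γ μhat f a b t gap - Qcorr γ μhat f a b s gap|
          ≤ ((2+2*B)*C₀) * ((N:ℝ)*|t-s|^ψ + (N:ℝ)^(-φ)) := by
      intro a b gap hgapN
      refine (hQdiff s hs t ht a b gap N hNn₁).trans ?_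
      have hgr : (gap:ℝ) ≤ (N:ℝ) := by exact_mod_cast hgapN
      have h1 : C₀*(gap:ℝ)*|t-s|^ψ ≤ C₀*(N:ℝ)*|t-s|^ψ := by
        have := mul_le_mul_of_nonneg_left hgr hC₀.le
        exact mul_le_mul_of_nonneg_right this hhψ
      nlinarith [mul_nonneg (mul_nonneg hC₀.le hNR0.le) hhψ, mul_nonneg hC₀.le hNφ, hB0]
    set w : ℕ → ℝ := fun k =>
      (Qcorr γ μhat f α β t (k+1) + Qcorr γ μhat f β α t (k+1))
        - (Qcorr γ μhat f α β s (k+1) + Qcorr γ μhat f β α s (k+1)) with hwdef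
    have hwsum : Summable w :=
      ((hQsum t ht α β).add (hQsum t ht β α)).sub ((hQsum s hs α β).add (hQsum s hs β α))
    have htsub : (∑' k : ℕ, (Qcorr γ μhat f α β t (k+1) + Qcorr γ μhat f β α t (k+1)))
        - (∑' k : ℕ, (Qcorr γ μhat f α β s (k+1) + Qcorr γ μhat f β α s (k+1)))
        = ∑' k, w k := by
      rw [hwdef]
      exact (Summable.tsum_sub ((hQsum t ht α β).add (hQsum t ht β α))
        ((hQsum s hs α β).add (hQsum s hs β α))).symm
    have hsplit : (∑' k, w k) = ∑ k ∈ Finset.range N, w k + ∑' k : ℕ, w (k + N) :=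
      (hwsum.sum_add_tsum_nat_add N).symm
    -- head bound
    have hwhead : ∀ k ∈ Finset.range N,
        |w k| ≤ 2*(((2+2*B)*C₀) * ((N:ℝ)*|t-s|^ψ + (N:ℝ)^(-φ))) := by
      intro k hk
      rw [Finset.mem_range] at hk
      rw [hwdef]
      have e : (Qcorr γ μhat f α β t (k+1) + Qcorr γ μhat f β α t (k+1))
          - (Qcorr γ μhat f α β s (k+1) + Qcorr γ μhat f β α s (k+1))
          = (Qcorr γ μhat f α β t (k+1) - Qcorr γ μhat f α β s (k+1))
            + (Qcorr γ μhat f β α t (k+1) - Qcorr γ μhat f β α s (k+1)) := by ring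
      simp only []
      rw [e]
      refine (abs_add_le _ _).trans ?_
      have h1 := hgap α β (k+1) (by omega)
      have h2 := hgap β α (k+1) (by omega)
      linarith
    have hhead : ∑ k ∈ Finset.range N, |w k|
        ≤ (N:ℝ) * (2*(((2+2*B)*C₀) * ((N:ℝ)*|t-s|^ψ + (N:ℝ)^(-φ)))) := by
      have := Finset.sum_le_card_nsmul (Finset.range N) (fun k => |w k|)
        (2*(((2+2*B)*C₀) * ((N:ℝ)*|t-s|^ψ + (N:ℝ)^(-φ)))) hwhead
      simpa [mul_comm] using this
    -- tail bound
    have hwk : ∀ k : ℕ, ‖w (k+N)‖ ≤ 4*C₀ * (((k:ℝ)+N+1)^(-φ)) := by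
      intro k
      rw [Real.norm_eq_abs, hwdef]
      simp only []
      have hgapk : n₁ ≤ k + N + 1 := by omega
      have h1 := hQdecay t ht α β (k+N+1) hgapk
      have h2 := hQdecay t ht β α (k+N+1) hgapk
      have h3 := hQdecay s hs α β (k+N+1) hgapk
      have h4 := hQdecay s hs β α (k+N+1) hgapk
      have hcast : ((k+N+1:ℕ):ℝ) = (k:ℝ)+N+1 := by push_cast; ring
      rw [hcast] at h1 h2 h3 h4
      have habs : |(Qcorr γ μhat f α β t (k+N+1) + Qcorr γ μhat f β α t (k+N+1))
          - (Qcorr γ μhat f α β s (k+N+1) + Qcorr γ μhat f β α s (k+N+1))|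
          ≤ (|Qcorr γ μhat f α β t (k+N+1)| + |Qcorr γ μhat f β α t (k+N+1)|)
            + (|Qcorr γ μhat f α β s (k+N+1)| + |Qcorr γ μhat f β α s (k+N+1)|) :=
        le_trans (abs_sub _ _) (add_le_add (abs_add_le _ _) (abs_add_le _ _))
      refine habs.trans ?_
      linarith
    have hdom : Summable (fun k : ℕ => 4*C₀ * (((k:ℝ)+N+1)^(-φ))) :=
      (summable_shift hφ N).mul_left _
    have hws : Summable (fun k => w (k+N)) := (summable_nat_add_iff N).mpr hwsum
    have hnormsum : Summable (fun k => ‖w (k+N)‖) :=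
      Summable.of_norm_bounded hdom (fun k => by rw [norm_norm]; exact hwk k)
    have htail : |∑' k : ℕ, w (k + N)| ≤ 4*C₀ * ((N:ℝ)^(1-φ)/(φ-1)) := by
      calc |∑' k : ℕ, w (k + N)| ≤ ∑' k : ℕ, ‖w (k+N)‖ := by
            rw [← Real.norm_eq_abs]
            exact norm_tsum_le_tsum_norm hnormsum
        _ ≤ ∑' k : ℕ, 4*C₀*(((k:ℝ)+N+1)^(-φ)) := Summable.tsum_le_tsum hwk hnormsum hdom
        _ = 4*C₀ * ∑' k : ℕ, ((k:ℝ)+N+1)^(-φ) := tsum_mul_left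
        _ ≤ 4*C₀ * ((N:ℝ)^(1-φ)/(φ-1)) := by
            refine mul_le_mul_of_nonneg_left ?_ (by linarith)
            exact Summable.tsum_le_of_sum_range_le (summable_shift hφ N)
              (fun n => tail_sum_le hφ hN1 n)
    -- rpow arithmetic
    have hNφ1 : (N:ℝ)*(N:ℝ)^(-φ) = (N:ℝ)^(1-φ) := by
      rw [show (1-φ) = 1 + (-φ) by ring, Real.rpow_add hNR0, Real.rpow_one]
    have hzsq : z*z*|t-s|^ψ = |t-s|^(ψ * (φ - 1) / (φ + 1)) := by
      rw [hz, ← Real.rpow_add hpos, ← Real.rpow_add hpos]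
      congr 1
      field_simp [hφ2.ne']
      ring
    have hz1φ : z^(1-φ) = |t-s|^(ψ * (φ - 1) / (φ + 1)) := by
      rw [hz, ← Real.rpow_mul (abs_nonneg _)]
      congr 1
      field_simp [hφ2.ne']
      ring
    have hN1φ : (N:ℝ)^(1-φ) ≤ |t-s|^(ψ * (φ - 1) / (φ + 1)) := by
      rw [← hz1φ]
      exact Real.rpow_le_rpow_of_nonpos (by linarith) hzN (by linarith)
    have hN2 : (N:ℝ)*(N:ℝ)*|t-s|^ψ ≤ ((n₁:ℝ)+2)^2 * |t-s|^(ψ * (φ - 1) / (φ + 1)) := by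
      have hzz : (0:ℝ) ≤ ((n₁:ℝ)+2)*z := by positivity
      have hNN : (N:ℝ)*(N:ℝ) ≤ (((n₁:ℝ)+2)*z)*(((n₁:ℝ)+2)*z) :=
        mul_le_mul hNz hNz hNR0.le hzz
      calc (N:ℝ)*(N:ℝ)*|t-s|^ψ ≤ ((((n₁:ℝ)+2)*z)*(((n₁:ℝ)+2)*z))*|t-s|^ψ :=
            mul_le_mul_of_nonneg_right hNN hhψ
        _ = ((n₁:ℝ)+2)^2 * (z*z*|t-s|^ψ) := by ring
        _ = ((n₁:ℝ)+2)^2 * |t-s|^(ψ * (φ - 1) / (φ + 1)) := by rw [hzsq]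
    -- combine everything
    have hQ0 := hgap α β 0 (Nat.zero_le N)
    have habs2 : |(Qcorr γ μhat f α β t 0
          + ∑' k : ℕ, (Qcorr γ μhat f α β t (k+1) + Qcorr γ μhat f β α t (k+1)))
        - (Qcorr γ μhat f α β s 0
          + ∑' k : ℕ, (Qcorr γ μhat f α β s (k+1) + Qcorr γ μhat f β α s (k+1)))|
        ≤ |Qcorr γ μhat f α β t 0 - Qcorr γ μhat f α β s 0|
          + (∑ k ∈ Finset.range N, |w k| + |∑' k : ℕ, w (k + N)|) := by
      have e : (Qcorr γ μhat f α β t 0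
          + ∑' k : ℕ, (Qcorr γ μhat f α β t (k+1) + Qcorr γ μhat f β α t (k+1)))
        - (Qcorr γ μhat f α β s 0
          + ∑' k : ℕ, (Qcorr γ μhat f α β s (k+1) + Qcorr γ μhat f β α s (k+1)))
          = (Qcorr γ μhat f α β t 0 - Qcorr γ μhat f α β s 0)
            + (∑ k ∈ Finset.range N, w k + ∑' k : ℕ, w (k + N)) := by
        rw [← hsplit, ← htsub]
        ring
      rw [e]
      refine (abs_add_le _ _).trans (add_le_add le_rfl ?_)
      refine (abs_add_le _ _).trans (add_le_add ?_ le_rfl)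
      exact Finset.abs_sum_le_sum_abs _ _
    refine habs2.trans ?_
    have hfinal1 : 4*C₀*((N:ℝ)^(1-φ)/(φ-1))
        = (4*C₀/(φ-1)) * (N:ℝ)^(1-φ) := by ring
    have hfinal2 : (4*C₀/(φ-1)) * (N:ℝ)^(1-φ)
        ≤ (4*C₀/(φ-1)) * |t-s|^(ψ * (φ - 1) / (φ + 1)) :=
      mul_le_mul_of_nonneg_left hN1φ (div_nonneg (by linarith) hφ1.le)
    have hNR1 : (1:ℝ) ≤ (N:ℝ) := by exact_mod_cast hN1
    have hX10 : (0:ℝ) ≤ (N:ℝ)*|t-s|^ψ + (N:ℝ)^(-φ) := by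
      have := mul_nonneg hNR0.le hhψ
      linarith
    have e1 : |Qcorr γ μhat f α β t 0 - Qcorr γ μhat f α β s 0|
        ≤ (N:ℝ)*(((2+2*B)*C₀)*((N:ℝ)*|t-s|^ψ + (N:ℝ)^(-φ))) :=
      hQ0.trans (le_mul_of_one_le_left (mul_nonneg hD₂0.le hX10) hNR1)
    have e2 : 3*(N:ℝ)*(((2+2*B)*C₀)*((N:ℝ)*|t-s|^ψ + (N:ℝ)^(-φ)))
        = 3*((2+2*B)*C₀)*((N:ℝ)*(N:ℝ)*|t-s|^ψ)
          + 3*((2+2*B)*C₀)*((N:ℝ)*(N:ℝ)^(-φ)) := by ring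
    rw [hNφ1] at e2
    have e3 : 3*((2+2*B)*C₀)*((N:ℝ)*(N:ℝ)*|t-s|^ψ)
        ≤ 3*((2+2*B)*C₀)*(((n₁:ℝ)+2)^2 * |t-s|^(ψ * (φ - 1) / (φ + 1))) :=
      mul_le_mul_of_nonneg_left hN2 (by positivity)
    have e4 : 3*((2+2*B)*C₀)*((N:ℝ)^(1-φ))
        ≤ 3*((2+2*B)*C₀)*(|t-s|^(ψ * (φ - 1) / (φ + 1))) :=
      mul_le_mul_of_nonneg_left hN1φ (by positivity)
    have e5 : 4*C₀*((N:ℝ)^(1-φ)/(φ-1))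
        ≤ (4*C₀/(φ-1)) * |t-s|^(ψ * (φ - 1) / (φ + 1)) := by
      rw [hfinal1]
      exact hfinal2
    linarith [hhead, htail, e1, e2, e3, e4, e5]
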